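/- Let φ : ℝ^d × ℝ^d → [0,∞] be measurable and β > 0. Then for every a > 0 and every i ∈ ℤ^d: Σ_{j∈ℤ^d, j≠i} sup_{y ∈ Λ_{a,j}} ∫_{Λ_{a,i}} (1 − e^{−βφ(x,y)}) dx ≤ sup_{x∈ℝ^d} ∫_{ℝ^d} Ψ_a(x,y) dy, as an inequality in [0,∞]. -/

import Mathlib

open MeasureTheory ENNReal

/-- The half-open cube `Λ_{a,j} = a j + (−a/2, a/2]^d` of side `a` centred at `a j`. -/
def cube (d : ℕ) (a : ℝ) (j : Fin d → ℤ) : Set (EuclideanSpace ℝ (Fin d)) :=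
  {x | ∀ k : Fin d, x k - a * (j k : ℝ) ∈ Set.Ioc (-(a / 2)) (a / 2)}

/-- `expNegE t = e^{−t}` for `t ∈ [0,∞]` as an element of `[0,∞]`, with `e^{−∞} = 0`. -/
noncomputable def expNegE (t : ℝ≥0∞) : ℝ≥0∞ :=
  if t = ∞ then 0 else ENNReal.ofReal (Real.exp (-t.toReal))

/-- The Mayer function `(x,y) ↦ 1 − e^{−βφ(x,y)}`, valued in `[0,∞]` (in fact `[0,1]`). -/
noncomputable def mayer {d : ℕ}
    (φ : EuclideanSpace ℝ (Fin d) → EuclideanSpace ℝ (Fin d) → ℝ≥0∞) (β : ℝ)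
    (x y : EuclideanSpace ℝ (Fin d)) : ℝ≥0∞ :=
  1 - expNegE (ENNReal.ofReal β * φ x y)

/-- The discretised Mayer majorant
`Ψ_a(x,y) = Σ_{j∈ℤ^d} 1_{y ∈ Λ_{a,j}} · sup_{y' ∈ Λ_{a,j}} (1 − e^{−βφ(x,y')})`. -/
noncomputable def Psi {d : ℕ}
    (φ : EuclideanSpace ℝ (Fin d) → EuclideanSpace ℝ (Fin d) → ℝ≥0∞) (β : ℝ) (a : ℝ)
    (x y : EuclideanSpace ℝ (Fin d)) : ℝ≥0∞ :=
  ∑' j : Fin d → ℤ,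
    (cube d a j).indicator (fun _ => ⨆ y' ∈ cube d a j, mayer φ β x y') y

/-- The cube is a measurable set. -/
lemma cube_measurableSet (d : ℕ) (a : ℝ) (j : Fin d → ℤ) : MeasurableSet (cube d a j) := by
  have : cube d a j = ⋂ k : Fin d,
      (fun x : EuclideanSpace ℝ (Fin d) => x k - a * (j k : ℝ)) ⁻¹' Set.Ioc (-(a / 2)) (a / 2) := by
    ext x; simp [cube, Set.mem_iInter]
  rw [this]
  exact MeasurableSet.iInter fun k =>
    ((by fun_prop : Continuous fun x : EuclideanSpace ℝ (Fin d) => x k - a * (j k : ℝ)).measurable)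
      measurableSet_Ioc

/-- All cubes of side `a` have the same volume. -/
lemma cube_volume_eq (d : ℕ) (a : ℝ) (i j : Fin d → ℤ) :
    volume (cube d a j) = volume (cube d a i) := by
  set w : EuclideanSpace ℝ (Fin d) := WithLp.toLp 2 (fun k => a * ((i k : ℝ) - (j k))) with hw
  have e : ∀ (x : EuclideanSpace ℝ (Fin d)) (k : Fin d),
      (x + w) k - a * (i k : ℝ) = x k - a * (j k : ℝ) := by
    intro x k
    have hx : (x + w) k = x k + a * ((i k : ℝ) - (j k)) := rfl
    rw [hx]; ring
  have hpre : cube d a j = (fun x => x + w) ⁻¹' cube d a i := by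
    ext x
    simp only [cube, Set.mem_preimage, Set.mem_setOf_eq, e]
  rw [hpre, measure_preimage_add_right volume w (cube d a i)]

/-- Superadditivity of the lower Lebesgue integral over countable sums,
without measurability assumptions. -/
lemma tsum_lintegral_le' {α : Type*} {ι : Type*} [MeasurableSpace α] (μ : Measure α)
    (f : ι → α → ℝ≥0∞) : ∑' n, ∫⁻ x, f n x ∂μ ≤ ∫⁻ x, ∑' n, f n x ∂μ := by
  rw [ENNReal.tsum_eq_iSup_sum]
  refine iSup_le fun s => ?_
  calc ∑ n ∈ s, ∫⁻ x, f n x ∂μ ≤ ∫⁻ x, ∑ n ∈ s, f n x ∂μ := by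
        classical
        induction s using Finset.induction with
        | empty => simp
        | insert _ _ hn ih =>
            rw [Finset.sum_insert hn]
            refine le_trans (add_le_add_right ih _) ?_
            refine le_trans (le_lintegral_add _ _) (lintegral_mono fun x => ?_)
            rw [Finset.sum_insert hn]
    _ ≤ ∫⁻ x, ∑' n, f n x ∂μ := lintegral_mono fun x => ENNReal.sum_le_tsum s

/-- The Dobrushin one-site sum of the discretised continuum model is bounded by the
uniform integral of the discretised Mayer majorant `Ψ_a`. -/
theorem dobrushin_sum_le_sup_lintegral_Psi
    {d : ℕ} (φ : EuclideanSpace ℝ (Fin d) → EuclideanSpace ℝ (Fin d) → ℝ≥0∞)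
    (hφ : Measurable (Function.uncurry φ))
    {β : ℝ} (hβ : 0 < β) {a : ℝ} (ha : 0 < a) (i : Fin d → ℤ) :
    ∑' j : {j : Fin d → ℤ // j ≠ i},
        ⨆ y ∈ cube d a (j : Fin d → ℤ), ∫⁻ x in cube d a i, mayer φ β x y ≤
      ⨆ x : EuclideanSpace ℝ (Fin d), ∫⁻ y, Psi φ β a x y := by
  classical
  set S : (Fin d → ℤ) → EuclideanSpace ℝ (Fin d) → ℝ≥0∞ :=
    fun j x => ⨆ y ∈ cube d a j, mayer φ β x y with hS
  calc
    ∑' j : {j : Fin d → ℤ // j ≠ i},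
        ⨆ y ∈ cube d a (j : Fin d → ℤ), ∫⁻ x in cube d a i, mayer φ β x y
      ≤ ∑' j : {j : Fin d → ℤ // j ≠ i}, ∫⁻ x in cube d a i, S (j : Fin d → ℤ) x := by
        refine ENNReal.tsum_le_tsum fun j => ?_
        refine iSup₂_le fun y hy => lintegral_mono fun x => ?_
        exact le_iSup₂ (f := fun y' (_ : y' ∈ cube d a (j : Fin d → ℤ)) => mayer φ β x y') y hy
    _ ≤ ∫⁻ x in cube d a i, ∑' j : {j : Fin d → ℤ // j ≠ i}, S (j : Fin d → ℤ) x :=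
        tsum_lintegral_le' _ _
    _ ≤ ∫⁻ x in cube d a i, ∑' j : Fin d → ℤ, S j x :=
        lintegral_mono fun x =>
          ENNReal.tsum_comp_le_tsum_of_injective Subtype.val_injective fun j => S j x
    _ ≤ ∫⁻ x in cube d a i, ⨆ x' : EuclideanSpace ℝ (Fin d), ∑' j : Fin d → ℤ, S j x' :=
        lintegral_mono fun x => le_iSup (fun x' => ∑' j : Fin d → ℤ, S j x') x
    _ = (⨆ x' : EuclideanSpace ℝ (Fin d), ∑' j : Fin d → ℤ, S j x') * volume (cube d a i) :=
        setLIntegral_const _ _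
    _ = ⨆ x' : EuclideanSpace ℝ (Fin d), ∑' j : Fin d → ℤ, volume (cube d a j) * S j x' := by
        rw [ENNReal.iSup_mul]
        refine iSup_congr fun x' => ?_
        rw [← ENNReal.tsum_mul_right]
        exact tsum_congr fun j => by rw [cube_volume_eq d a i j, mul_comm]
    _ = ⨆ x' : EuclideanSpace ℝ (Fin d), ∫⁻ y, Psi φ β a x' y := by
        refine iSup_congr fun x' => ?_
        have : ∀ y, Psi φ β a x' y =
            ∑' j : Fin d → ℤ, (cube d a j).indicator (fun _ => S j x') y := fun y => rfl
        simp only [this]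
        rw [lintegral_tsum fun j =>
          (measurable_const.indicator (cube_measurableSet d a j)).aemeasurable]
        refine tsum_congr fun j => ?_
        rw [lintegral_indicator (cube_measurableSet d a j), setLIntegral_const, mul_comm]
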